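/- For any context-free grammar G, the set of simple adjunct trees extractable from derivation trees of G is finite. -/

import Mathlib

/-- Trees whose internal nodes are labeled by nonterminals in `V`
and whose leaves are labeled by elements of `L`. -/
inductive PTree (V L : Type) : Type
  | leaf : L → PTree V L
  | node : V → List (PTree V L) → PTree V L

namespace PTree

variable {V A L : Type}

/-- Leaf alphabet for contexts/adjunct trees: a letter-or-ε leaf, or the hole. -/
abbrev Aug (A : Type) := Option A ⊕ Unit

/-- The root label of a tree: a nonterminal or a leaf label. -/
def rootLabel : PTree V L → V ⊕ L
  | .leaf a => .inr a
  | .node X _ => .inl X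

/-- Set of nonterminals occurring in a tree. -/
def ntSet : PTree V L → Set V
  | .leaf _ => ∅
  | .node X ts => insert X ((ts.attach.map (fun ⟨t, _⟩ => ntSet t)).foldr (· ∪ ·) ∅)

/-- A tree is simple if no nonterminal occurs twice on a root-to-leaf path. -/
def Simple : PTree V L → Prop
  | .leaf _ => True
  | .node X ts => ∀ t ∈ ts, X ∉ ntSet t ∧ Simple t

/-- Number of holes in a context / adjunct tree. -/
def holes : PTree V (Aug A) → ℕ
  | .leaf (.inr _) => 1
  | .leaf (.inl _) => 0
  | .node _ ts => (ts.attach.map (fun ⟨t, _⟩ => holes t)).sum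

/-- Substitute the tree `T` for every hole. -/
def subst (T : PTree V (Option A)) : PTree V (Aug A) → PTree V (Option A)
  | .leaf (.inl a) => .leaf a
  | .leaf (.inr _) => T
  | .node X ts => .node X (ts.attach.map (fun ⟨t, _⟩ => subst T t))

/-- Embed a `(V,A)`-tree into trees with holes (no holes created). -/
def toAug : PTree V (Option A) → PTree V (Aug A)
  | .leaf a => .leaf (.inl a)
  | .node X ts => .node X (ts.attach.map (fun ⟨t, _⟩ => toAug t))

/-- Yield of a `(V,A)`-tree. -/
def yield : PTree V (Option A) → List A
  | .leaf none => []
  | .leaf (some a) => [a]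
  | .node _ ts => (ts.attach.map (fun ⟨t, _⟩ => yield t)).flatten

/-- Yield of a context / adjunct tree, holes contributing `ε`. -/
def yieldA : PTree V (Aug A) → List A
  | .leaf (.inl none) => []
  | .leaf (.inl (some a)) => [a]
  | .leaf (.inr _) => []
  | .node _ ts => (ts.attach.map (fun ⟨t, _⟩ => yieldA t)).flatten

/-- Height of a tree. -/
def height : PTree V L → ℕ
  | .leaf _ => 0
  | .node _ ts => (ts.attach.map (fun ⟨t, _⟩ => height t)).foldr max 0 + 1

/-- Size (number of nodes) of a tree. -/
def tsize : PTree V L → ℕ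
  | .leaf _ => 1
  | .node _ ts => (ts.attach.map (fun ⟨t, _⟩ => tsize t)).sum + 1

end PTree

open PTree

/-- A context-free grammar over `A` with nonterminals `V`:
a finite set of rules `D ⊆ V × (V ∪ A ∪ {ε})⁺` and a start symbol. -/
structure CFG (V A : Type) where
  rules : Set (V × List (V ⊕ Option A))
  rules_fin : rules.Finite
  start : V

variable {V A : Type}

/-- A tree is a valid derivation w.r.t. the rules `D`. -/
inductive IsDeriv (D : Set (V × List (V ⊕ Option A))) : PTree V (Option A) → Prop
  | leaf (a : Option A) : IsDeriv D (.leaf a)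
  | node (X : V) (ts : List (PTree V (Option A))) :
      (X, ts.map rootLabel) ∈ D → (∀ t ∈ ts, IsDeriv D t) → IsDeriv D (.node X ts)

/-- The set `Trees(G)` of derivation trees of `G`. -/
def TreesSet (G : CFG V A) : Set (PTree V (Option A)) :=
  {T | T.rootLabel = .inl G.start ∧ IsDeriv G.rules T}

/-- The language of `G`: yields of derivation trees. -/
def lang (G : CFG V A) : Set (List A) := PTree.yield '' TreesSet G

/-- An adjunct tree is represented by its root nonterminal `X` together with a tree
over `V, A ∪ {X}` (the distinguished leaf `X` being the hole). -/
abbrev AdjT (V A : Type) := V × PTree V (Aug A)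

/-- Wellformedness of an adjunct tree: root node labeled `X`, exactly one `X`-leaf. -/
def WFAdjunct (p : AdjT V A) : Prop :=
  (∃ ts, p.2 = PTree.node p.1 ts) ∧ p.2.holes = 1

/-- A simple adjunct tree: no nonterminal repeats on paths from a child of the root. -/
def SimpleAdjunct (p : AdjT V A) : Prop :=
  ∃ ts, p.2 = PTree.node p.1 ts ∧ ∀ t ∈ ts, Simple t

/-- Root label of a subtree of an adjunct tree with root nonterminal `X`:
the hole leaf is labeled `X`. -/
def augRoot (X : V) : PTree V (Aug A) → V ⊕ Option A
  | .leaf (.inl a) => .inr a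
  | .leaf (.inr _) => .inl X
  | .node Y _ => .inl Y

/-- An adjunct tree is extracted from derivation trees of `D`: every internal
node respects the rules. -/
inductive IsDerivA (D : Set (V × List (V ⊕ Option A))) (X : V) : PTree V (Aug A) → Prop
  | leaf (a : Aug A) : IsDerivA D X (.leaf a)
  | node (Y : V) (ts : List (PTree V (Aug A))) :
      (Y, ts.map (augRoot X)) ∈ D → (∀ t ∈ ts, IsDerivA D X t) → IsDerivA D X (.node Y ts)

/-- `T ⊢_α T'` : `T'` is obtained from `T` by adjoining the adjunct tree `α`
at some occurrence of its root nonterminal. -/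
def Adjoins (α : AdjT V A) (T T' : PTree V (Option A)) : Prop :=
  WFAdjunct α ∧
  ∃ (C : PTree V (Aug A)) (ts : List (PTree V (Option A))),
    C.holes = 1 ∧
    subst (.node α.1 ts) C = T ∧
    subst (subst (.node α.1 ts) α.2) C = T'

/-- `AdjChain L T T'` : `T'` is obtained from `T` by successively adjoining
the adjunct trees listed in `L`. -/
def AdjChain : List (AdjT V A) → PTree V (Option A) → PTree V (Option A) → Prop
  | [], T, T' => T = T'
  | α :: L, T, T' => ∃ T₁, Adjoins α T T₁ ∧ AdjChain L T₁ T'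

/-- `Adj⁺(T,S)` : trees obtained from `T` using exactly the adjunct trees of `S`,
each at least once. -/
def AdjPlus (T : PTree V (Option A)) (S : Set (AdjT V A)) : Set (PTree V (Option A)) :=
  {T' | ∃ L : List (AdjT V A), AdjChain L T T' ∧ {α | α ∈ L} = S}

/-- `Adj(T,S)` : trees obtained from `T` using adjunct trees of `S`, arbitrarily often. -/
def AdjStar (T : PTree V (Option A)) (S : Set (AdjT V A)) : Set (PTree V (Option A)) :=
  {T' | ∃ L : List (AdjT V A), AdjChain L T T' ∧ {α | α ∈ L} ⊆ S}

namespace PTree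
variable [DecidableEq V]

mutual
/-- Find the leftmost `X`-rooted subtree: returns the surrounding context
(with a hole in its place) and the subtree. -/
def extract (X : V) : PTree V (Option A) → Option (PTree V (Aug A) × PTree V (Option A))
  | .leaf _ => none
  | .node Y ts =>
    if Y = X then some (.leaf (.inr ()), .node Y ts)
    else match extractL X ts with
      | none => none
      | some (Cs, sub) => some (.node Y Cs, sub)

/-- List version of `extract`. -/
def extractL (X : V) : List (PTree V (Option A)) → Option (List (PTree V (Aug A)) × PTree V (Option A))
  | [] => none
  | t :: ts =>
    match extract X t with
    | some (C, sub) => some (C :: ts.map toAug, sub)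
    | none =>
      match extractL X ts with
      | some (Cs, sub) => some (toAug t :: Cs, sub)
      | none => none
end

/-- Takahashi's decomposition of a tree into a simple tree and a set of
simple adjunct trees. -/
def decomp : PTree V (Option A) → PTree V (Option A) × Set (AdjT V A)
  | .leaf a => (.leaf a, ∅)
  | .node X ts =>
    let rs := ts.attach.map (fun ⟨t, _⟩ => decomp t)
    let S := (rs.map Prod.snd).foldr (· ∪ ·) ∅
    match extractL X (rs.map Prod.fst) with
    | none => (.node X (rs.map Prod.fst), S)
    | some (Cs, sub) => (sub, insert (X, PTree.node X Cs) S)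

end PTree

/-- The simple trees arising from decompositions of derivation trees. -/
def sTrees (G : CFG V A) [DecidableEq V] : Set (PTree V (Option A)) :=
  {T' | ∃ T ∈ TreesSet G, (decomp T).1 = T'}

/-- The simple adjunct trees arising from decompositions of derivation trees. -/
def sLoops (G : CFG V A) [DecidableEq V] : Set (AdjT V A) :=
  {α | ∃ T ∈ TreesSet G, α ∈ (decomp T).2}

/-- Parikh map. -/
def parikh [DecidableEq A] (w : List A) : A → ℕ := fun a => w.count a

/-- Linear subsets of `ℕ^A`. -/
def IsLinear (S : Set (A → ℕ)) : Prop :=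
  ∃ (v₀ : A → ℕ) (k : ℕ) (v : Fin k → A → ℕ),
    S = {u | ∃ x : Fin k → ℕ, u = v₀ + ∑ i, x i • v i}

/-- Semilinear subsets of `ℕ^A`: finite unions of linear sets. -/
def IsSemilinear (S : Set (A → ℕ)) : Prop :=
  ∃ (n : ℕ) (f : Fin n → Set (A → ℕ)), (∀ i, IsLinear (f i)) ∧ S = ⋃ i, f i
namespace PTree
variable {V A L : Type}

/-- All node arities bounded by `N`. -/
def BArity (N : ℕ) : PTree V L → Prop
  | .leaf _ => True
  | .node _ ts => ts.length ≤ N ∧ ∀ t ∈ ts, BArity N t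

lemma attach_map_fn (ts : List (PTree V L)) (f : PTree V L → β) :
    ts.attach.map (fun ⟨t, _⟩ => f t) = ts.map f := by
  simp [List.map_attach_eq_pmap]

lemma height_node (X : V) (ts : List (PTree V L)) :
    height (PTree.node X ts) = (ts.map height).foldr max 0 + 1 := by
  rw [height]; rw [attach_map_fn ts height]

lemma foldr_max_le {l : List ℕ} {c : ℕ} (h : ∀ x ∈ l, x ≤ c) : l.foldr max 0 ≤ c := by
  induction l with
  | nil => simp
  | cons a l ih =>
    simp only [List.foldr_cons, max_le_iff]
    exact ⟨h a (by simp), ih fun x hx => h x (List.mem_cons_of_mem _ hx)⟩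

lemma le_foldr_max {l : List ℕ} {x : ℕ} (h : x ∈ l) : x ≤ l.foldr max 0 := by
  induction l with
  | nil => simp at h
  | cons a l ih =>
    rcases List.mem_cons.1 h with rfl | h
    · exact le_max_left _ _
    · exact le_trans (ih h) (le_max_right _ _)

lemma ntSet_node (X : V) (ts : List (PTree V L)) :
    ntSet (PTree.node X ts) = insert X ((ts.map ntSet).foldr (· ∪ ·) ∅) := by
  rw [ntSet]; rw [attach_map_fn ts ntSet]

lemma subset_foldr_union {s : Set V} {l : List (Set V)} (h : s ∈ l) :
    s ⊆ l.foldr (· ∪ ·) ∅ := by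
  induction l with
  | nil => simp at h
  | cons a l ih =>
    rcases List.mem_cons.1 h with rfl | h
    · exact Set.subset_union_left
    · exact subset_trans (ih h) Set.subset_union_right

lemma ntSet_child_subset {X : V} {ts : List (PTree V L)} {t : PTree V L} (ht : t ∈ ts) :
    ntSet t ⊆ ntSet (PTree.node X ts) := by
  rw [ntSet_node]
  exact subset_trans (subset_foldr_union (List.mem_map_of_mem (f := ntSet) ht))
    (Set.subset_insert _ _)

lemma simple_height_le_ncard [Finite V] :
    ∀ t : PTree V L, Simple t → height t ≤ (ntSet t).ncard := by
  intro t
  induction t using PTree.rec (motive_2 := fun ts => ∀ t ∈ ts, Simple t → height t ≤ (ntSet t).ncard) with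
  | leaf a => intro _; simp [height]
  | node X ts ih =>
    intro hs0
    have hs : ∀ t ∈ ts, X ∉ ntSet t ∧ Simple t := by
      simp only [Simple] at hs0; exact hs0
    rw [height_node]
    have hX : X ∈ ntSet (PTree.node X ts) := by rw [ntSet_node]; exact Set.mem_insert _ _
    have hfin : (ntSet (PTree.node X ts)).Finite := Set.toFinite _
    have h1 : 0 < (ntSet (PTree.node X ts)).ncard := by
      exact (Set.ncard_pos hfin).2 ⟨X, hX⟩
    have hc : ∀ x ∈ ts.map height, x ≤ (ntSet (PTree.node X ts)).ncard - 1 := by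
      intro x hx
      rcases List.mem_map.1 hx with ⟨t, ht, rfl⟩
      have hsub : ntSet t ⊆ ntSet (PTree.node X ts) \ {X} := by
        intro y hy
        exact ⟨ntSet_child_subset ht hy, fun hyX => (hs t ht).1 (hyX ▸ hy)⟩
      calc height t ≤ (ntSet t).ncard := ih t ht (hs t ht).2
        _ ≤ (ntSet (PTree.node X ts) \ {X}).ncard := Set.ncard_le_ncard hsub hfin.diff
        _ = (ntSet (PTree.node X ts)).ncard - 1 := by
            rw [Set.ncard_diff_singleton_of_mem hX]
    have := foldr_max_le hc
    omega
  | nil => rename_i t ht _; simp at ht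
  | cons a l iha ihl =>
    rename_i t ht hsmp
    rcases List.mem_cons.1 ht with rfl | ht
    · exact iha hsmp
    · exact ihl t ht hsmp

lemma simple_height [Finite V] (t : PTree V L) (h : Simple t) :
    height t ≤ Nat.card V := by
  refine le_trans (simple_height_le_ncard t h) ?_
  exact le_trans (Set.ncard_le_ncard (Set.subset_univ _) Set.finite_univ) (by simp [Set.ncard_univ])

/-- Trees of bounded height and arity over finite alphabets form a finite set. -/
lemma finite_bounded [Finite V] [Finite L] (N : ℕ) :
    ∀ h : ℕ, {t : PTree V L | height t ≤ h ∧ BArity N t}.Finite := by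
  intro h
  induction h with
  | zero =>
    apply Set.Finite.subset (Set.finite_range (PTree.leaf : L → PTree V L))
    rintro t ⟨hh, _⟩
    cases t with
    | leaf a => exact ⟨a, rfl⟩
    | node X ts => rw [height_node] at hh; omega
  | succ h ih =>
    have hlists : {l : List (PTree V L) | l.length ≤ N ∧
        ∀ t ∈ l, t ∈ {t : PTree V L | height t ≤ h ∧ BArity N t}}.Finite := by
      have : Finite {t : PTree V L // t ∈ {t : PTree V L | height t ≤ h ∧ BArity N t}} :=
        ih.to_subtype
      apply Set.Finite.subset
        (Set.Finite.image (List.map Subtype.val)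
          (List.finite_length_le
            (α := {t : PTree V L // t ∈ {t : PTree V L | height t ≤ h ∧ BArity N t}}) N))
      rintro l ⟨hlen, hmem⟩
      refine ⟨l.pmap (fun t ht => ⟨t, ht⟩) hmem, ?_, ?_⟩
      · simpa using hlen
      · rw [List.map_pmap]
        conv_rhs => rw [← List.map_id l]
        exact List.pmap_eq_map _
    apply Set.Finite.subset
      ((Set.finite_range (PTree.leaf : L → PTree V L)).union
        (Set.Finite.image (fun p : V × List (PTree V L) => PTree.node p.1 p.2)
          ((Set.finite_univ (α := V)).prod hlists)))
    rintro t ⟨hh, hb⟩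
    cases t with
    | leaf a => exact Or.inl ⟨a, rfl⟩
    | node X ts =>
      have hb' : ts.length ≤ N ∧ ∀ t ∈ ts, BArity N t := by
        simp only [BArity] at hb; exact hb
      refine Or.inr ⟨(X, ts), ⟨Set.mem_univ _, ?_, ?_⟩, rfl⟩
      · exact hb'.1
      · intro t ht
        refine ⟨?_, hb'.2 t ht⟩
        rw [height_node] at hh
        have h2 : height t ≤ (ts.map height).foldr max 0 :=
          le_foldr_max (List.mem_map_of_mem (f := height) ht)
        omega

end PTree

lemma isDerivA_barity {V A : Type} {D : Set (V × List (V ⊕ Option A))} {X : V} {N : ℕ}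
    (hN : ∀ r ∈ D, r.2.length ≤ N) :
    ∀ {t : PTree V (PTree.Aug A)}, IsDerivA D X t → PTree.BArity N t := by
  intro t ht
  induction ht with
  | leaf a => simp [PTree.BArity]
  | node Y ts hrule _ ih =>
    simp only [PTree.BArity]
    refine ⟨?_, ih⟩
    have := hN _ hrule
    simpa using this

/-- For any context-free grammar `G`, the set of simple adjunct trees
extractable from derivation trees of `G` is finite. -/
theorem simple_adjuncts_finite {V A : Type} [Finite V] [Finite A] (G : CFG V A) :
    {α : AdjT V A | WFAdjunct α ∧ IsDerivA G.rules α.1 α.2 ∧ SimpleAdjunct α}.Finite := by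
  obtain ⟨N, hN⟩ : ∃ N : ℕ, ∀ r ∈ G.rules, r.2.length ≤ N := by
    have hfin : ((fun r : V × List (V ⊕ Option A) => r.2.length) '' G.rules).Finite :=
      G.rules_fin.image _
    obtain ⟨N, hNb⟩ := hfin.bddAbove
    exact ⟨N, fun r hr => hNb ⟨r, hr, rfl⟩⟩
  haveI := Fintype.ofFinite A
  haveI : Finite (PTree.Aug A) := by infer_instance
  apply Set.Finite.subset
    ((Set.finite_univ (α := V)).prod
      (PTree.finite_bounded (V := V) (L := PTree.Aug A) N (Nat.card V + 1)))
  rintro ⟨X, T⟩ ⟨hwf, hderiv, hsimp⟩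
  refine ⟨Set.mem_univ _, ?_, isDerivA_barity hN hderiv⟩
  obtain ⟨ts', hT', hsimp'⟩ := hsimp
  simp only at hT'
  subst hT'
  rw [PTree.height_node]
  have : ∀ x ∈ ts'.map PTree.height, x ≤ Nat.card V := by
    intro x hx
    rcases List.mem_map.1 hx with ⟨t, ht, rfl⟩
    exact PTree.simple_height t (hsimp' t ht)
  have := PTree.foldr_max_le this
  omega
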